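/- Let C be the category whose objects are G-graded vector spaces V = ⊕_{g∈G} V_g equipped with an α-projective G-action (linear maps f: V → V with f(V_g) = V_{fgf^{-1}} and (fg).v = α(f,g|h)·f.(g.v) for v ∈ V_h), with tensor product graded in the usual way and with action f.(x⊗y) = α(f|g,h)(f.x ⊗ f.y) for x ∈ X_g, y ∈ Y_h, associator given by multiplication by α(f,g,h) on X_f⊗Y_g⊗Z_h, and braiding c(x⊗y) = f.y ⊗ x for x ∈ X_f. Then these data satisfy the hexagon axioms, i.e., C is a braided monoidal category. -/

import Mathlib

open scoped BigOperators TensorProduct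

/-- `α(f,g|h) = α(f,g,h)⁻¹ · α(f, ghg⁻¹, g) · α((fg)h(fg)⁻¹, f, g)⁻¹`. -/
def aux2 {G : Type} [Group G] {k : Type} [Field k]
    (α : G → G → G → kˣ) (f g h : G) : kˣ :=
  (α f g h)⁻¹ * α f (g * h * g⁻¹) g * (α ((f * g) * h * (f * g)⁻¹) f g)⁻¹

/-- `α(f|g,h) = α(f,g,h) · α(fgf⁻¹, f, h)⁻¹ · α(fgf⁻¹, fhf⁻¹, f)`. -/
def aux1 {G : Type} [Group G] {k : Type} [Field k]
    (α : G → G → G → kˣ) (f g h : G) : kˣ :=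
  α f g h * (α (f * g * f⁻¹) f h)⁻¹ * α (f * g * f⁻¹) (f * h * f⁻¹) f

/-- An object of `Z(G,α)`: a `G`-graded vector space (grading given by a complete
orthogonal system of idempotent projections) with an `α`-projective `G`-action
compatible with the grading. -/
structure ZObj (k : Type) [Field k] (G : Type) [Group G] [Fintype G]
    (α : G → G → G → kˣ) where
  V : Type
  [ac : AddCommGroup V]
  [mo : Module k V]
  p : G → V →ₗ[k] V
  p_idem : ∀ g, p g ∘ₗ p g = p g
  p_orth : ∀ g h, g ≠ h → p g ∘ₗ p h = 0
  p_total : ∑ g : G, p g = LinearMap.id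
  ρ : G → V →ₗ[k] V
  ρ_one : ρ 1 = LinearMap.id
  ρ_bij : ∀ g, Function.Bijective (ρ g)
  grade : ∀ g h, ρ g ∘ₗ p h = p (g * h * g⁻¹) ∘ₗ ρ g
  proj : ∀ g h x, ρ (g * h) ∘ₗ p x
    = ((aux2 α g h x : kˣ) : k) • ((ρ g ∘ₗ ρ h) ∘ₗ p x)

attribute [instance] ZObj.ac ZObj.mo

section TensorData

variable {k : Type} [Field k] {G : Type} [Group G] [Fintype G] [DecidableEq G]
variable {X Y Z : Type} [AddCommGroup X] [Module k X] [AddCommGroup Y] [Module k Y]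
  [AddCommGroup Z] [Module k Z]

/-- The grading of the tensor product: `(X⊗Y)_f = ⊕_{f₁f₂=f} X_{f₁} ⊗ Y_{f₂}`. -/
noncomputable def tP (pX : G → X →ₗ[k] X) (pY : G → Y →ₗ[k] Y) (f : G) :
    X ⊗[k] Y →ₗ[k] X ⊗[k] Y :=
  ∑ q : G × G, if q.1 * q.2 = f then TensorProduct.map (pX q.1) (pY q.2) else 0

/-- The action on the tensor product: `f.(x⊗y) = α(f|g,h)(f.x ⊗ f.y)` for
`x ∈ X_g`, `y ∈ Y_h`. -/
noncomputable def tRho (α : G → G → G → kˣ)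
    (pX : G → X →ₗ[k] X) (pY : G → Y →ₗ[k] Y)
    (ρX : G → X →ₗ[k] X) (ρY : G → Y →ₗ[k] Y) (f : G) :
    X ⊗[k] Y →ₗ[k] X ⊗[k] Y :=
  ∑ q : G × G, ((aux1 α f q.1 q.2 : kˣ) : k) •
    TensorProduct.map (ρX f ∘ₗ pX q.1) (ρY f ∘ₗ pY q.2)

/-- The braiding `c_{X,Y}(x⊗y) = f.y ⊗ x` for `x ∈ X_f`. -/
noncomputable def braidMap (pX : G → X →ₗ[k] X) (ρY : G → Y →ₗ[k] Y) :
    X ⊗[k] Y →ₗ[k] Y ⊗[k] X :=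
  ∑ f : G, (TensorProduct.comm k X Y).toLinearMap ∘ₗ
    TensorProduct.map (pX f) (ρY f)

/-- The associator `(X⊗Y)⊗Z → X⊗(Y⊗Z)`, acting by `α(x,y,z)⁻¹` on
`X_x ⊗ Y_y ⊗ Z_z` (the inverse of the structure map
`x⊗(y⊗z) ↦ α(x,y,z)(x⊗y)⊗z` of `Z(G,α)`). -/
noncomputable def assocF (α : G → G → G → kˣ)
    (pX : G → X →ₗ[k] X) (pY : G → Y →ₗ[k] Y) (pZ : G → Z →ₗ[k] Z) :
    (X ⊗[k] Y) ⊗[k] Z →ₗ[k] X ⊗[k] (Y ⊗[k] Z) :=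
  ∑ t : G × G × G, (((α t.1 t.2.1 t.2.2)⁻¹ : kˣ) : k) •
    ((TensorProduct.assoc k X Y Z).toLinearMap ∘ₗ
      TensorProduct.map (TensorProduct.map (pX t.1) (pY t.2.1)) (pZ t.2.2))

/-- The associator `X⊗(Y⊗Z) → (X⊗Y)⊗Z`, acting by `α(x,y,z)` on
`X_x ⊗ Y_y ⊗ Z_z` (the structure map of `Z(G,α)` in the paper's convention). -/
noncomputable def assocB (α : G → G → G → kˣ)
    (pX : G → X →ₗ[k] X) (pY : G → Y →ₗ[k] Y) (pZ : G → Z →ₗ[k] Z) :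
    X ⊗[k] (Y ⊗[k] Z) →ₗ[k] (X ⊗[k] Y) ⊗[k] Z :=
  ∑ t : G × G × G, ((α t.1 t.2.1 t.2.2 : kˣ) : k) •
    ((TensorProduct.assoc k X Y Z).symm.toLinearMap ∘ₗ
      TensorProduct.map (pX t.1) (TensorProduct.map (pY t.2.1) (pZ t.2.2)))

end TensorData

section Lemmas
set_option linter.unusedSectionVars false

variable {k : Type} [Field k] {G : Type} [Group G] [Fintype G] [DecidableEq G]
variable {α : G → G → G → kˣ}

/-- `x` is homogeneous of degree `a` for the projection system `p`. -/
def IsHom {V : Type} [AddCommGroup V] [Module k V]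
    (p : G → V →ₗ[k] V) (a : G) (x : V) : Prop :=
  ∀ c, p c x = if c = a then x else 0

lemma IsHom.self {V : Type} [AddCommGroup V] [Module k V]
    {p : G → V →ₗ[k] V} {a : G} {x : V} (hx : IsHom p a x) : p a x = x := by
  rw [hx]; simp

lemma IsHom.ne {V : Type} [AddCommGroup V] [Module k V]
    {p : G → V →ₗ[k] V} {a : G} {x : V} (hx : IsHom p a x) {c : G} (h : c ≠ a) :
    p c x = 0 := by
  rw [hx]; simp [h]

lemma isHom_p (X : ZObj k G α) (a : G) (x : X.V) : IsHom X.p a (X.p a x) := by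
  intro c
  by_cases h : c = a
  · subst h
    simpa using LinearMap.congr_fun (X.p_idem c) x
  · simpa [h] using LinearMap.congr_fun (X.p_orth c a h) x

lemma sum_p (X : ZObj k G α) (x : X.V) : ∑ g, X.p g x = x := by
  simpa [LinearMap.sum_apply] using LinearMap.congr_fun X.p_total x

lemma isHom_rho (X : ZObj k G α) {a : G} {x : X.V} (hx : IsHom X.p a x) (g : G) :
    IsHom X.p (g * a * g⁻¹) (X.ρ g x) := by
  intro c
  have h := LinearMap.congr_fun (X.grade g (g⁻¹ * c * g)) x
  have hc : g * (g⁻¹ * c * g) * g⁻¹ = c := by group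
  rw [LinearMap.comp_apply, LinearMap.comp_apply, hc] at h
  rw [← h, hx]
  by_cases hca : c = g * a * g⁻¹
  · have h1 : g⁻¹ * c * g = a := by rw [hca]; group
    rw [if_pos h1, if_pos hca]
  · have h1 : g⁻¹ * c * g ≠ a := by
      intro h'
      apply hca
      rw [← h']; group
    rw [if_neg h1, if_neg hca]
    simp

lemma rho_mul (X : ZObj k G α) {a : G} {x : X.V} (hx : IsHom X.p a x) (g h : G) :
    X.ρ (g * h) x = ((aux2 α g h a : kˣ) : k) • X.ρ g (X.ρ h x) := by
  have h2 := LinearMap.congr_fun (X.proj g h a) x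
  simp only [LinearMap.comp_apply, LinearMap.smul_apply, hx.self] at h2
  exact h2

variable {X Y Z : Type} [AddCommGroup X] [Module k X] [AddCommGroup Y] [Module k Y]
  [AddCommGroup Z] [Module k Z]

lemma tP_apply {pX : G → X →ₗ[k] X} {pY : G → Y →ₗ[k] Y} {a b : G} {x : X} {y : Y}
    (hx : IsHom pX a x) (hy : IsHom pY b y) (f : G) :
    tP pX pY f (x ⊗ₜ y) = if a * b = f then x ⊗ₜ[k] y else 0 := by
  unfold tP
  rw [LinearMap.sum_apply, Finset.sum_eq_single (a, b)]
  · by_cases h : a * b = f <;> simp [h, hx.self, hy.self]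
  · rintro ⟨c, d⟩ - hq
    by_cases hc : c = a
    · have hd : d ≠ b := by rintro rfl; exact hq (by rw [hc])
      split_ifs <;> simp [hy.ne hd]
    · split_ifs <;> simp [hx.ne hc]
  · simp

lemma isHom_tP {pX : G → X →ₗ[k] X} {pY : G → Y →ₗ[k] Y} {a b : G} {x : X} {y : Y}
    (hx : IsHom pX a x) (hy : IsHom pY b y) :
    IsHom (tP pX pY) (a * b) (x ⊗ₜ y) := by
  intro c
  rw [tP_apply hx hy]
  by_cases h : c = a * b <;> simp [h, eq_comm]

lemma tRho_apply {pX ρX : G → X →ₗ[k] X} {pY ρY : G → Y →ₗ[k] Y} {a b : G} {x : X} {y : Y}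
    (hx : IsHom pX a x) (hy : IsHom pY b y) (f : G) :
    tRho α pX pY ρX ρY f (x ⊗ₜ y)
      = ((aux1 α f a b : kˣ) : k) • (ρX f x ⊗ₜ[k] ρY f y) := by
  unfold tRho
  rw [LinearMap.sum_apply, Finset.sum_eq_single (a, b)]
  · simp [hx.self, hy.self]
  · rintro ⟨c, d⟩ - hq
    by_cases hc : c = a
    · have hd : d ≠ b := by rintro rfl; exact hq (by rw [hc])
      simp [hc, hy.ne hd]
    · simp [hx.ne hc]
  · simp

lemma braid_apply {pX : G → X →ₗ[k] X} {ρY : G → Y →ₗ[k] Y} {a : G} {x : X} (y : Y)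
    (hx : IsHom pX a x) :
    braidMap pX ρY (x ⊗ₜ y) = ρY a y ⊗ₜ[k] x := by
  unfold braidMap
  rw [LinearMap.sum_apply, Finset.sum_eq_single a]
  · simp [hx.self]
  · intro f _ hf
    simp [hx.ne hf]
  · simp

lemma assocF_apply {pX : G → X →ₗ[k] X} {pY : G → Y →ₗ[k] Y} {pZ : G → Z →ₗ[k] Z}
    {a b c : G} {x : X} {y : Y} {z : Z}
    (hx : IsHom pX a x) (hy : IsHom pY b y) (hz : IsHom pZ c z) :
    assocF α pX pY pZ ((x ⊗ₜ y) ⊗ₜ z)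
      = (((α a b c)⁻¹ : kˣ) : k) • (x ⊗ₜ[k] (y ⊗ₜ[k] z)) := by
  unfold assocF
  rw [LinearMap.sum_apply, Finset.sum_eq_single (a, b, c)]
  · simp [hx.self, hy.self, hz.self]
  · rintro ⟨u, v, w⟩ - hq
    by_cases hu : u = a
    · by_cases hv : v = b
      · have hw : w ≠ c := by rintro rfl; exact hq (by rw [hu, hv])
        simp [hu, hv, hz.ne hw]
      · simp [hu, hy.ne hv]
    · simp [hx.ne hu]
  · simp

lemma assocB_apply {pX : G → X →ₗ[k] X} {pY : G → Y →ₗ[k] Y} {pZ : G → Z →ₗ[k] Z}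
    {a b c : G} {x : X} {y : Y} {z : Z}
    (hx : IsHom pX a x) (hy : IsHom pY b y) (hz : IsHom pZ c z) :
    assocB α pX pY pZ (x ⊗ₜ (y ⊗ₜ z))
      = ((α a b c : kˣ) : k) • ((x ⊗ₜ[k] y) ⊗ₜ[k] z) := by
  unfold assocB
  rw [LinearMap.sum_apply, Finset.sum_eq_single (a, b, c)]
  · simp [hx.self, hy.self, hz.self]
  · rintro ⟨u, v, w⟩ - hq
    by_cases hu : u = a
    · by_cases hv : v = b
      · have hw : w ≠ c := by rintro rfl; exact hq (by rw [hu, hv])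
        simp [hu, hv, hz.ne hw]
      · simp [hu, hy.ne hv]
    · simp [hx.ne hu]
  · simp

end Lemmas

section Ext
set_option linter.unusedSectionVars false
variable {k : Type} [Field k] {G : Type} [Group G] [Fintype G] [DecidableEq G]
variable {α : G → G → G → kˣ}

lemma ext2 (X Y : ZObj k G α) {W : Type} [AddCommGroup W] [Module k W]
    {L M : X.V ⊗[k] Y.V →ₗ[k] W}
    (h : ∀ (a b : G) (x : X.V) (y : Y.V), IsHom X.p a x → IsHom Y.p b y →
      L (x ⊗ₜ y) = M (x ⊗ₜ y)) : L = M := by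
  apply TensorProduct.ext'
  intro x y
  conv_lhs => rw [← sum_p X x, ← sum_p Y y]
  conv_rhs => rw [← sum_p X x, ← sum_p Y y]
  simp only [TensorProduct.sum_tmul, TensorProduct.tmul_sum, map_sum]
  exact Finset.sum_congr rfl fun a _ => Finset.sum_congr rfl fun b _ =>
    h _ _ _ _ (isHom_p X _ x) (isHom_p Y _ y)

lemma ext3 (X Y Z : ZObj k G α) {W : Type} [AddCommGroup W] [Module k W]
    {L M : (X.V ⊗[k] Y.V) ⊗[k] Z.V →ₗ[k] W}
    (h : ∀ (a b c : G) (x : X.V) (y : Y.V) (z : Z.V),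
      IsHom X.p a x → IsHom Y.p b y → IsHom Z.p c z →
      L ((x ⊗ₜ y) ⊗ₜ z) = M ((x ⊗ₜ y) ⊗ₜ z)) : L = M := by
  apply TensorProduct.ext_threefold
  intro x y z
  conv_lhs => rw [← sum_p X x, ← sum_p Y y, ← sum_p Z z]
  conv_rhs => rw [← sum_p X x, ← sum_p Y y, ← sum_p Z z]
  simp only [TensorProduct.sum_tmul, TensorProduct.tmul_sum, map_sum]
  refine Finset.sum_congr rfl fun a _ => Finset.sum_congr rfl fun b _ =>
    Finset.sum_congr rfl fun c _ => ?_
  exact h _ _ _ _ _ _ (isHom_p X _ x) (isHom_p Y _ y) (isHom_p Z _ z)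

lemma ext3' (X Y Z : ZObj k G α) {W : Type} [AddCommGroup W] [Module k W]
    {L M : X.V ⊗[k] (Y.V ⊗[k] Z.V) →ₗ[k] W}
    (h : ∀ (a b c : G) (x : X.V) (y : Y.V) (z : Z.V),
      IsHom X.p a x → IsHom Y.p b y → IsHom Z.p c z →
      L (x ⊗ₜ (y ⊗ₜ z)) = M (x ⊗ₜ (y ⊗ₜ z))) : L = M := by
  apply TensorProduct.ext'
  intro x w
  induction w using TensorProduct.induction_on with
  | zero => simp
  | add u v hu hv => simp [TensorProduct.tmul_add, hu, hv]
  | tmul y z =>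
    conv_lhs => rw [← sum_p X x, ← sum_p Y y, ← sum_p Z z]
    conv_rhs => rw [← sum_p X x, ← sum_p Y y, ← sum_p Z z]
    simp only [TensorProduct.sum_tmul, TensorProduct.tmul_sum, map_sum]
    refine Finset.sum_congr rfl fun a _ => Finset.sum_congr rfl fun b _ =>
      Finset.sum_congr rfl fun c _ => ?_
    exact h _ _ _ _ _ _ (isHom_p X _ x) (isHom_p Y _ y) (isHom_p Z _ z)

lemma key2 (α : G → G → G → kˣ) (g a b : G) :
    aux1 α g a b * (aux2 α (g * a * g⁻¹) g b)⁻¹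
      = aux1 α g (a * b * a⁻¹) a * (aux2 α g a b)⁻¹ := by
  unfold aux1 aux2
  rw [show g * a * g⁻¹ * g * b * (g * a * g⁻¹ * g)⁻¹ = g * (a * b * a⁻¹) * g⁻¹ from by group]
  rw [show g * a * b * (g * a)⁻¹ = g * (a * b * a⁻¹) * g⁻¹ from by group]
  rw [Units.ext_iff]
  simp only [Units.val_mul, Units.val_inv_eq_inv_val]
  field_simp

lemma key3 (α : G → G → G → kˣ) (a b c : G) :
    (α a b c)⁻¹ * aux1 α a b c * (α (a * b * a⁻¹) (a * c * a⁻¹) a)⁻¹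
      = (α (a * b * a⁻¹) a c)⁻¹ := by
  unfold aux1
  rw [Units.ext_iff]
  simp only [Units.val_mul, Units.val_inv_eq_inv_val]
  field_simp

lemma key4 (α : G → G → G → kˣ) (a b c : G) :
    α a b c * aux2 α a b c * α (a * (b * c * b⁻¹) * a⁻¹) a b
      = α a (b * c * b⁻¹) b := by
  unfold aux2
  rw [show a * b * c * (a * b)⁻¹ = a * (b * c * b⁻¹) * a⁻¹ from by group]
  rw [Units.ext_iff]
  simp only [Units.val_mul, Units.val_inv_eq_inv_val]
  field_simp

end Ext
/-- the data of `Z(G,α)` — `G`-graded vector spaces with `α`-projective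
`G`-action, tensor product with action twisted by `α(f|g,h)`, associator given by
`α(f,g,h)`, and braiding `c(x⊗y) = f.y ⊗ x` for `x ∈ X_f` — satisfy the axioms of a
braided monoidal category: the braiding is a morphism in `Z(G,α)` (compatible with
the grading and the action of the tensor product) and the two hexagon axioms hold. -/
theorem stmt3 {k : Type} [Field k] {G : Type} [Group G] [Fintype G] [DecidableEq G]
    (α : G → G → G → kˣ)
    (hcoc : ∀ f g h l : G,
      α g h l * α f (g * h) l * α f g h = α (f * g) h l * α f g (h * l))
    (hnorm : ∀ f g h : G, f = 1 ∨ g = 1 ∨ h = 1 → α f g h = 1)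
    (X Y Z : ZObj k G α) :
    -- the braiding preserves the grading
    (∀ f : G, braidMap X.p Y.ρ ∘ₗ tP X.p Y.p f
        = tP Y.p X.p f ∘ₗ braidMap X.p Y.ρ) ∧
    -- the braiding is equivariant for the (projective) action
    (∀ g : G, braidMap X.p Y.ρ ∘ₗ tRho α X.p Y.p X.ρ Y.ρ g
        = tRho α Y.p X.p Y.ρ X.ρ g ∘ₗ braidMap X.p Y.ρ) ∧
    -- hexagon axiom (forward)
    (assocF α Y.p Z.p X.p ∘ₗ
        braidMap X.p (tRho α Y.p Z.p Y.ρ Z.ρ) ∘ₗ assocF α X.p Y.p Z.p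
      = TensorProduct.map LinearMap.id (braidMap X.p Z.ρ) ∘ₗ
          assocF α Y.p X.p Z.p ∘ₗ
          TensorProduct.map (braidMap X.p Y.ρ) LinearMap.id) ∧
    -- hexagon axiom (reverse)
    (assocB α Z.p X.p Y.p ∘ₗ
        braidMap (tP X.p Y.p) Z.ρ ∘ₗ assocB α X.p Y.p Z.p
      = TensorProduct.map (braidMap X.p Z.ρ) LinearMap.id ∘ₗ
          assocB α X.p Z.p Y.p ∘ₗ
          TensorProduct.map LinearMap.id (braidMap Y.p Z.ρ)) := by
  refine ⟨?_, ?_, ?_, ?_⟩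
  · -- grading
    intro f
    apply ext2 X Y
    intro a b x y hx hy
    simp only [LinearMap.comp_apply]
    rw [tP_apply hx hy, braid_apply y hx, tP_apply (isHom_rho Y hy a) hx]
    by_cases hab : a * b = f
    · rw [if_pos hab, braid_apply y hx,
        if_pos (show a * b * a⁻¹ * a = f by rw [← hab]; group)]
    · rw [if_neg hab, map_zero,
        if_neg (show ¬ a * b * a⁻¹ * a = f by
          intro h; exact hab (by rw [← h]; group))]
  · -- equivariance
    intro g
    apply ext2 X Y
    intro a b x y hx hy
    simp only [LinearMap.comp_apply]
    rw [tRho_apply hx hy, map_smul, braid_apply (Y.ρ g y) (isHom_rho X hx g),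
      braid_apply y hx, tRho_apply (isHom_rho Y hy a) hx]
    have e1 : Y.ρ (g * a * g⁻¹) (Y.ρ g y)
        = (((aux2 α (g * a * g⁻¹) g b)⁻¹ : kˣ) : k) • Y.ρ (g * a) y := by
      have := rho_mul Y hy (g * a * g⁻¹) g
      rw [show g * a * g⁻¹ * g = g * a from by group] at this
      rw [this, smul_smul]
      norm_cast
      rw [inv_mul_cancel, Units.val_one, one_smul]
    have e2 : Y.ρ g (Y.ρ a y)
        = (((aux2 α g a b)⁻¹ : kˣ) : k) • Y.ρ (g * a) y := by
      have := rho_mul Y hy g a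
      rw [this, smul_smul]
      norm_cast
      rw [inv_mul_cancel, Units.val_one, one_smul]
    rw [e1, e2, TensorProduct.smul_tmul', TensorProduct.smul_tmul', smul_smul, smul_smul]
    have hk : ((aux1 α g a b : kˣ) : k) * (((aux2 α (g * a * g⁻¹) g b)⁻¹ : kˣ) : k)
        = ((aux1 α g (a * b * a⁻¹) a : kˣ) : k) * (((aux2 α g a b)⁻¹ : kˣ) : k) := by
      exact_mod_cast key2 α g a b
    rw [hk]
  · -- hexagon forward
    apply ext3 X Y Z
    intro a b c x y z hx hy hz
    simp only [LinearMap.comp_apply, TensorProduct.map_tmul, LinearMap.id_coe, id_eq]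
    rw [assocF_apply hx hy hz, map_smul, map_smul,
      braid_apply (y ⊗ₜ z) hx, tRho_apply hy hz a, ← TensorProduct.smul_tmul',
      map_smul, assocF_apply (isHom_rho Y hy a) (isHom_rho Z hz a) hx,
      braid_apply y hx, assocF_apply (isHom_rho Y hy a) hx hz, map_smul,
      TensorProduct.map_tmul, LinearMap.id_coe, id_eq, braid_apply z hx,
      smul_smul, smul_smul]
    have hk : (((α a b c)⁻¹ : kˣ) : k) * ((aux1 α a b c : kˣ) : k)
          * (((α (a * b * a⁻¹) (a * c * a⁻¹) a)⁻¹ : kˣ) : k)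
        = (((α (a * b * a⁻¹) a c)⁻¹ : kˣ) : k) := by
      exact_mod_cast key3 α a b c
    rw [hk]
  · -- hexagon reverse
    apply ext3' X Y Z
    intro a b c x y z hx hy hz
    simp only [LinearMap.comp_apply, TensorProduct.map_tmul, LinearMap.id_coe, id_eq]
    rw [assocB_apply hx hy hz, map_smul, map_smul,
      braid_apply z (isHom_tP hx hy), rho_mul Z hz a b,
      ← TensorProduct.smul_tmul', map_smul,
      assocB_apply (isHom_rho Z (isHom_rho Z hz b) a) hx hy,
      braid_apply z hy,
      assocB_apply hx (isHom_rho Z hz b) hy, map_smul, TensorProduct.map_tmul,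
      LinearMap.id_coe, id_eq, braid_apply (Z.ρ b z) hx,
      smul_smul, smul_smul]
    have hk : ((α a b c : kˣ) : k) * ((aux2 α a b c : kˣ) : k)
          * ((α (a * (b * c * b⁻¹) * a⁻¹) a b : kˣ) : k)
        = ((α a (b * c * b⁻¹) b : kˣ) : k) := by
      exact_mod_cast key4 α a b c
    rw [hk]
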